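/- Lemma (J₀ is cylindrical on the negative end, the content of Lemma 2.14 with corrected sign/constant conventions): fix ε > 0. For points (θ,t,r,s) ∈ ℝ⁴ with 0 < ‖(t,s)‖ ≤ ε, let J₀ be the linear map with J₀ e_θ = −ε‖(t,s)‖ e_t, J₀ e_t = (ε‖(t,s)‖)⁻¹ e_θ, J₀ e_r = −ε‖(t,s)‖ e_s, J₀ e_s = (ε‖(t,s)‖)⁻¹ e_r. Let Ĵ be the almost-complex structure on the source ℝ⁴ (coordinates (τ,θ,r,φ)) determined by Ĵ ∂_τ = ε⁻¹(cos φ ∂_θ + sin φ ∂_r), Ĵ(cos φ ∂_θ + sin φ ∂_r) = −ε ∂_τ, Ĵ(sin φ ∂_θ − cos φ ∂_r) = ε ∂_φ, and Ĵ ∂_φ = −ε⁻¹(sin φ ∂_θ − cos φ ∂_r). Then for every p = (τ,θ,r,φ) with τ ≤ 0 and every v ∈ ℝ⁴, Dι(p)(Ĵ_p v) = J₀(ι(p))(Dι(p) v); i.e. ι intertwines the cylindrical almost-complex structure Ĵ with J₀, where in particular Ĵ sends ∂_τ to the Reeb vector field ε⁻¹(cos φ ∂_θ + sin φ ∂_r)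 of the contact form α = ε(cos φ dθ + sin φ dr). -/

import Mathlib

noncomputable section

/-- The Liouville-flow embedding `ι(τ,θ,r,φ) = (θ, ε e^τ cos φ, r, ε e^τ sin φ)`,
source coordinates `(τ, θ, r, φ)` (indices `0, 1, 2, 3`), target coordinates
`(θ, t, r, s)` (indices `0, 1, 2, 3`). -/
def iota (ε : ℝ) (p : Fin 4 → ℝ) : Fin 4 → ℝ :=
  ![p 1, ε * Real.exp (p 0) * Real.cos (p 3), p 2, ε * Real.exp (p 0) * Real.sin (p 3)]

/-- The almost-complex structure `J₀` at a target point `q = (θ, t, r, s)`, given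
with `ρ = ε‖(t,s)‖` by `J₀ e_θ = −ρ e_t`, `J₀ e_t = ρ⁻¹ e_θ`, `J₀ e_r = −ρ e_s`,
`J₀ e_s = ρ⁻¹ e_r`. -/
def J0cyl (ε : ℝ) (q : Fin 4 → ℝ) (u : Fin 4 → ℝ) : Fin 4 → ℝ :=
  ![(ε * Real.sqrt ((q 1) ^ 2 + (q 3) ^ 2))⁻¹ * u 1,
    -(ε * Real.sqrt ((q 1) ^ 2 + (q 3) ^ 2) * u 0),
    (ε * Real.sqrt ((q 1) ^ 2 + (q 3) ^ 2))⁻¹ * u 3,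
    -(ε * Real.sqrt ((q 1) ^ 2 + (q 3) ^ 2) * u 2)]

/-- The cylindrical almost-complex structure `Ĵ` on the source `(τ, θ, r, φ)`,
determined by `Ĵ ∂_τ = ε⁻¹(cos φ ∂_θ + sin φ ∂_r)`,
`Ĵ(cos φ ∂_θ + sin φ ∂_r) = −ε ∂_τ`, `Ĵ(sin φ ∂_θ − cos φ ∂_r) = ε ∂_φ`,
`Ĵ ∂_φ = −ε⁻¹(sin φ ∂_θ − cos φ ∂_r)`; in particular `Ĵ` sends `∂_τ` to the
Reeb vector field of `α = ε(cos φ dθ + sin φ dr)`. -/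
def Jhat (ε : ℝ) (p : Fin 4 → ℝ) (u : Fin 4 → ℝ) : Fin 4 → ℝ :=
  ![-(ε * (Real.cos (p 3) * u 1 + Real.sin (p 3) * u 2)),
    ε⁻¹ * (Real.cos (p 3) * u 0 - Real.sin (p 3) * u 3),
    ε⁻¹ * (Real.sin (p 3) * u 0 + Real.cos (p 3) * u 3),
    ε * (Real.sin (p 3) * u 1 - Real.cos (p 3) * u 2)]

def pr (i : Fin 4) : (Fin 4 → ℝ) →L[ℝ] ℝ := ContinuousLinearMap.proj i

lemma iota_hasFDerivAt (ε : ℝ) (p : Fin 4 → ℝ) :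
    HasFDerivAt (iota ε)
      (ContinuousLinearMap.pi
        ![pr 1,
          (ε * Real.exp (p 0) * Real.cos (p 3)) • pr 0
            - (ε * Real.exp (p 0) * Real.sin (p 3)) • pr 3,
          pr 2,
          (ε * Real.exp (p 0) * Real.sin (p 3)) • pr 0
            + (ε * Real.exp (p 0) * Real.cos (p 3)) • pr 3]) p := by
  apply hasFDerivAt_pi''
  have e0 := hasFDerivAt_apply (𝕜 := ℝ) (0 : Fin 4) p
  have e3 := hasFDerivAt_apply (𝕜 := ℝ) (3 : Fin 4) p
  have h1 : HasFDerivAt (fun x : Fin 4 → ℝ => ε * Real.exp (x 0) * Real.cos (x 3)) _ p :=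
    ((e0.exp.const_mul ε).mul e3.cos)
  have h3 : HasFDerivAt (fun x : Fin 4 → ℝ => ε * Real.exp (x 0) * Real.sin (x 3)) _ p :=
    ((e0.exp.const_mul ε).mul e3.sin)
  intro i
  fin_cases i <;>
    simp only [iota, Matrix.cons_val_zero, Matrix.cons_val_one, Matrix.head_cons,
      Matrix.cons_val_two, Matrix.tail_cons, Matrix.cons_val_three,
      ContinuousLinearMap.proj_pi, Fin.isValue]
  · exact hasFDerivAt_apply 1 p
  · exact h1.congr_fderiv (by ext w; simp [pr]; ring)
  · exact hasFDerivAt_apply 2 p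
  · exact h3.congr_fderiv (by ext w; simp [pr]; ring)

/-- Lemma 2.14 (with corrected conventions): on the negative end `{τ ≤ 0}`
the embedding `ι` intertwines the cylindrical almost-complex structure `Ĵ`
with `J₀`, i.e. `Dι(p) ∘ Ĵ_p = J₀(ι(p)) ∘ Dι(p)`. -/
theorem J0_cylindrical (ε : ℝ) (hε : 0 < ε)
    (p : Fin 4 → ℝ) (hτ : p 0 ≤ 0) :
    ∀ v : Fin 4 → ℝ,
      fderiv ℝ (iota ε) p (Jhat ε p v)
        = J0cyl ε (iota ε p) (fderiv ℝ (iota ε) p v) := by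
  intro v
  have hD := (iota_hasFDerivAt ε p).fderiv
  set A := ε * Real.exp (p 0) with hA
  have hApos : 0 < A := mul_pos hε (Real.exp_pos _)
  have key : ∀ w : Fin 4 → ℝ, fderiv ℝ (iota ε) p w
      = ![w 1, A * Real.cos (p 3) * w 0 - A * Real.sin (p 3) * w 3, w 2,
          A * Real.sin (p 3) * w 0 + A * Real.cos (p 3) * w 3] := by
    intro w
    rw [hD]
    funext i
    fin_cases i <;> simp [pr] <;> ring
  have hsqrt : Real.sqrt ((A * Real.cos (p 3)) ^ 2 + (A * Real.sin (p 3)) ^ 2) = A := by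
    have h : (A * Real.cos (p 3)) ^ 2 + (A * Real.sin (p 3)) ^ 2 = A ^ 2 := by
      have := Real.sin_sq_add_cos_sq (p 3)
      nlinarith
    rw [h, Real.sqrt_sq hApos.le]
  have hc2 := Real.sin_sq_add_cos_sq (p 3)
  rw [key, key]
  funext i
  fin_cases i
  · simp [J0cyl, Jhat, iota, pr, ← hA, hsqrt]; field_simp
  · simp [J0cyl, Jhat, iota, pr, ← hA, hsqrt]; linear_combination (-(A * ε * v 1)) * hc2
  · simp [J0cyl, Jhat, iota, pr, ← hA, hsqrt]; field_simp
  · simp [J0cyl, Jhat, iota, pr, ← hA, hsqrt]; linear_combination (-(A * ε * v 2)) * hc2
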